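/- Let F(x,λ) = λ⁷ − (12x+4)λ⁶ + (12x²+34x+5)λ⁵ + (240x³+20x²−26x−2)λ⁴ − 4x(80x³+128x²+14x−1)λ³ − 16x²(112x³+8x²−14x−1)λ² + 128x⁴(8x²+18x+3)λ + 2048x⁶(2x+1), and define λ₁(x) := 2x + 1 + √(20x²+4x+1) for x ≥ 0. Then F(x, λ₁(x)) = 0 for all x ≥ 0; in particular D := λ₁(1) = 8 is a root of F(1,·) strictly exceeding the modulus of every other complex root of F(1,·), since F(1,λ) = (λ+2)²(λ−3)(λ−4)(λ−8)(λ−(5−√89)/2)(λ−(5+√89)/2). Moreover e := λ₁′(1)/D = 4/5 and v := (−λ₁′(1)² + D·λ₁″(1) + D·λ₁′(1))/D² = 22/125 > 0. -/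

import Mathlib

open Set

theorem ladders_euler_genus_parameters
    (F : ℝ → ℝ → ℝ)
    (hF : ∀ x l : ℝ, F x l = l ^ 7 - (12 * x + 4) * l ^ 6 +
      (12 * x ^ 2 + 34 * x + 5) * l ^ 5 +
      (240 * x ^ 3 + 20 * x ^ 2 - 26 * x - 2) * l ^ 4 -
      4 * x * (80 * x ^ 3 + 128 * x ^ 2 + 14 * x - 1) * l ^ 3 -
      16 * x ^ 2 * (112 * x ^ 3 + 8 * x ^ 2 - 14 * x - 1) * l ^ 2 +
      128 * x ^ 4 * (8 * x ^ 2 + 18 * x + 3) * l + 2048 * x ^ 6 * (2 * x + 1))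
    (Fc : ℂ → ℂ)
    (hFc : ∀ l : ℂ, Fc l = l ^ 7 - (12 + 4) * l ^ 6 +
      (12 + 34 + 5) * l ^ 5 + (240 + 20 - 26 - 2) * l ^ 4 -
      4 * (80 + 128 + 14 - 1) * l ^ 3 - 16 * (112 + 8 - 14 - 1) * l ^ 2 +
      128 * (8 + 18 + 3) * l + 2048 * (2 + 1))
    (lam : ℝ → ℝ)
    (hlam : ∀ x : ℝ, lam x = 2 * x + 1 + Real.sqrt (20 * x ^ 2 + 4 * x + 1)) :
    (∀ x : ℝ, 0 ≤ x → F x (lam x) = 0) ∧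
    lam 1 = 8 ∧
    (∀ l : ℝ, F 1 l = (l + 2) ^ 2 * (l - 3) * (l - 4) * (l - 8) *
      (l - (5 - Real.sqrt 89) / 2) * (l - (5 + Real.sqrt 89) / 2)) ∧
    (∀ μ : ℂ, Fc μ = 0 → μ ≠ 8 → ‖μ‖ < 8) ∧
    deriv lam 1 / 8 = 4 / 5 ∧
    (-(deriv lam 1) ^ 2 + 8 * deriv (deriv lam) 1 + 8 * deriv lam 1) / 8 ^ 2 = 22 / 125 ∧
    0 < (22 : ℝ) / 125 := by
  have hg : ∀ x : ℝ, (0:ℝ) < 20 * x ^ 2 + 4 * x + 1 := by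
    intro x; nlinarith [sq_nonneg (10 * x + 1)]
  have h25 : Real.sqrt 25 = 5 := by
    rw [show (25:ℝ) = 5 ^ 2 by norm_num, Real.sqrt_sq (by norm_num : (0:ℝ) ≤ 5)]
  -- derivative of lam everywhere
  have hpoly : ∀ x : ℝ, HasDerivAt (fun t : ℝ => 20 * t ^ 2 + 4 * t + 1) (40 * x + 4) x := by
    intro x
    have h := (((hasDerivAt_pow 2 x).const_mul (20:ℝ)).add
      ((hasDerivAt_id x).const_mul (4:ℝ))).add_const (1:ℝ)
    exact h.congr_deriv (by ring)
  have hsq : ∀ x : ℝ, HasDerivAt (fun t : ℝ => Real.sqrt (20 * t ^ 2 + 4 * t + 1))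
      ((40 * x + 4) / (2 * Real.sqrt (20 * x ^ 2 + 4 * x + 1))) x := by
    intro x
    exact (hpoly x).sqrt (ne_of_gt (hg x))
  have hlam' : ∀ x : ℝ, HasDerivAt lam
      (2 + (40 * x + 4) / (2 * Real.sqrt (20 * x ^ 2 + 4 * x + 1))) x := by
    intro x
    have h := (((hasDerivAt_id x).const_mul (2:ℝ)).add_const (1:ℝ)).add (hsq x)
    have hfun : lam = fun t : ℝ => 2 * t + 1 + Real.sqrt (20 * t ^ 2 + 4 * t + 1) :=
      funext hlam
    rw [hfun]
    exact h.congr_deriv (by ring)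
  have hderiv_eq : deriv lam = fun x : ℝ =>
      2 + (40 * x + 4) / (2 * Real.sqrt (20 * x ^ 2 + 4 * x + 1)) :=
    funext fun x => (hlam' x).deriv
  have hd1 : deriv lam 1 = 32 / 5 := by
    rw [hderiv_eq]
    norm_num [h25]
  have hd2 : deriv (deriv lam) 1 = 16 / 125 := by
    rw [hderiv_eq]
    have hden : HasDerivAt (fun t : ℝ => 2 * Real.sqrt (20 * t ^ 2 + 4 * t + 1))
        (44 / 5) 1 := by
      have h := (hsq 1).const_mul (2:ℝ)
      exact h.congr_deriv (by norm_num [h25])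
    have hnum : HasDerivAt (fun t : ℝ => 40 * t + 4) 40 1 := by
      have h := ((hasDerivAt_id (1:ℝ)).const_mul (40:ℝ)).add_const (4:ℝ)
      exact h.congr_deriv (by ring)
    have hdne : (2 : ℝ) * Real.sqrt (20 * 1 ^ 2 + 4 * 1 + 1) ≠ 0 := by
      norm_num [h25]
    have h := ((hnum.div hden hdne).const_add (2:ℝ)).deriv
    rw [show (fun x : ℝ => 2 + (40 * x + 4) / (2 * Real.sqrt (20 * x ^ 2 + 4 * x + 1)))
      = fun x : ℝ => 2 + ((fun t : ℝ => 40 * t + 4) /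
        (fun t : ℝ => 2 * Real.sqrt (20 * t ^ 2 + 4 * t + 1))) x from rfl, h]
    norm_num [h25]
  refine ⟨?_, ?_, ?_, ?_, ?_, ?_, by norm_num⟩
  · -- F x (lam x) = 0
    intro x hx
    have hs : Real.sqrt (20 * x ^ 2 + 4 * x + 1) ^ 2 = 20 * x ^ 2 + 4 * x + 1 :=
      Real.sq_sqrt (le_of_lt (hg x))
    rw [hF, hlam]
    set s := Real.sqrt (20 * x ^ 2 + 4 * x + 1) with hsdef
    linear_combination ((2*x+1+s)^5 + (-2-8*x)*(2*x+1+s)^4 + (1+10*x-4*x^2)*(2*x+1+s)^3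
      + (-2*x+20*x^2+96*x^3)*(2*x+1+s)^2 + (-8*x^2-80*x^3)*(2*x+1+s)
      - 128*x^4 - 256*x^5) * hs
  · -- lam 1 = 8
    rw [hlam]
    norm_num [h25]
  · -- factorization at x = 1
    intro l
    have h89 : Real.sqrt 89 ^ 2 = 89 := Real.sq_sqrt (by norm_num)
    rw [hF]
    linear_combination ((l + 2) ^ 2 * (l - 3) * (l - 4) * (l - 8) / 4) * h89
  · -- complex roots
    intro μ h h8
    rw [hFc] at h
    have hfac : (μ + 2) ^ 2 * (μ - 3) * (μ - 4) * (μ - 8) * (μ ^ 2 - 5 * μ - 16) = 0 := by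
      linear_combination h
    have hsqrt89 : (0:ℝ) ≤ 89 := by norm_num
    have hb : Real.sqrt 89 < 11 := by
      nlinarith [Real.sq_sqrt hsqrt89, Real.sqrt_nonneg 89]
    have hb0 : (0:ℝ) ≤ Real.sqrt 89 := Real.sqrt_nonneg 89
    have hr2 : ((Real.sqrt 89 : ℝ) : ℂ) ^ 2 = 89 := by
      norm_cast
      exact Real.sq_sqrt (by norm_num)
    have habs : ∀ t : ℝ, μ = (t : ℂ) → |t| < 8 → ‖μ‖ < 8 := by
      intro t ht hlt
      rw [ht, Complex.norm_real, Real.norm_eq_abs]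
      exact hlt
    rcases mul_eq_zero.mp hfac with h1 | hquad
    · rcases mul_eq_zero.mp h1 with h2 | h4
      · rcases mul_eq_zero.mp h2 with h3 | hm3
        · rcases mul_eq_zero.mp h3 with hm2 | hm3'
          · have hμ : μ = ((-2 : ℝ) : ℂ) := by
              have h0 : μ + 2 = 0 := by
                exact (pow_eq_zero_iff (by norm_num : (2:ℕ) ≠ 0)).mp hm2
              push_cast
              linear_combination h0
            exact habs _ hμ (by norm_num)
          · have hμ : μ = ((3 : ℝ) : ℂ) := by push_cast; linear_combination hm3'
            exact habs _ hμ (by norm_num)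
        · have hμ : μ = ((4 : ℝ) : ℂ) := by push_cast; linear_combination hm3
          exact habs _ hμ (by norm_num)
      · exact absurd (by linear_combination h4 : μ = 8) h8
    · have hq2 : (2 * μ - 5 - ((Real.sqrt 89 : ℝ) : ℂ)) *
          (2 * μ - 5 + ((Real.sqrt 89 : ℝ) : ℂ)) = 0 := by
        linear_combination 4 * hquad - hr2
      rcases mul_eq_zero.mp hq2 with hz | hz
      · have hμ : μ = (((5 + Real.sqrt 89) / 2 : ℝ) : ℂ) := by
          push_cast
          linear_combination hz / 2
        refine habs _ hμ ?_
        rw [abs_lt]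
        constructor <;> linarith
      · have hμ : μ = (((5 - Real.sqrt 89) / 2 : ℝ) : ℂ) := by
          push_cast
          linear_combination hz / 2
        refine habs _ hμ ?_
        rw [abs_lt]
        constructor <;> linarith
  · rw [hd1]; norm_num
  · rw [hd1, hd2]; norm_num
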